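/- Let d ≥ 1, γ ≥ 0, k ≥ 1 be integers, and set n_G = 2(d + γ - 1). Suppose G is a map of degree d that omits r₀ values with total branching order n₀ over those values (so k ≥ d·r₀ - n₀), and has totally ramified values b₁,...,b_{l₀} with minimal multiplicities ν₁,...,ν_{l₀} ≥ 2 and total branching order n_r over them (so d·l₀ - n_r ≤ Σᵢ d/νᵢ), with n₀ + n_r ≤ n_G. Then r₀ + Σᵢ (1 - 1/νᵢ) ≤ (n_G + k)/d = 2 + 2(γ - 1 + k/2)/d. -/
import Mathlib


/-- Core counting argument for the main ramification estimate (Theorem 2.3):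
with `n_G = 2(d + γ - 1)` the total branching order, `r₀` omitted values with
branching `n₀` over them (so `k ≥ d r₀ - n₀`), totally ramified values with
minimal multiplicities `νᵢ ≥ 2` and branching `n_r` over them (so
`d l₀ - n_r ≤ Σ d/νᵢ`), and `n₀ + n_r ≤ n_G`, one gets
`r₀ + Σ (1 - 1/νᵢ) ≤ (n_G + k)/d = 2 + 2(γ - 1 + k/2)/d`. -/
theorem stmt_2 (d γ k : ℤ) (hd : 1 ≤ d) (hγ : 0 ≤ γ) (hk : 1 ≤ k)
    (r₀ n₀ : ℤ) (hr₀ : 0 ≤ r₀) (hn₀ : 0 ≤ n₀)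
    (l₀ : ℕ) (ν : Fin l₀ → ℤ) (hν : ∀ i, 2 ≤ ν i)
    (n_r : ℤ) (hnr : 0 ≤ n_r)
    (nG : ℤ) (hnG : nG = 2 * (d + γ - 1))
    (hexc : k ≥ d * r₀ - n₀)
    (hram : (d : ℝ) * l₀ - n_r ≤ ∑ i, (d : ℝ) / (ν i))
    (htot : n₀ + n_r ≤ nG) :
    (r₀ : ℝ) + ∑ i, (1 - 1 / (ν i : ℝ)) ≤ ((nG : ℝ) + k) / d ∧
      ((nG : ℝ) + k) / d = 2 + 2 * ((γ : ℝ) - 1 + (k : ℝ) / 2) / d := by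
  have hd0 : (0:ℝ) < d := by exact_mod_cast lt_of_lt_of_le zero_lt_one hd
  constructor
  · have h1 : (d:ℝ) * r₀ - n₀ ≤ k := by exact_mod_cast hexc
    have htot' : (n₀:ℝ) + n_r ≤ nG := by exact_mod_cast htot
    have h2 : (d:ℝ) * (∑ i, (1 - 1/(ν i:ℝ))) = (d:ℝ) * l₀ - ∑ i, (d:ℝ)/(ν i) := by
      rw [Finset.mul_sum]
      rw [Finset.sum_congr rfl (fun i _ => by ring : ∀ i ∈ Finset.univ, (d:ℝ) * (1 - 1/(ν i:ℝ)) = (d:ℝ) - (d:ℝ)/(ν i))]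
      rw [Finset.sum_sub_distrib, Finset.sum_const]
      simp [mul_comm]
    rw [le_div_iff₀ hd0]
    nlinarith [hram]
  · field_simp
    rw [hnG]
    push_cast
    ring
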